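/- Let T be a finite set of time slots, R ⊆ T a set of slots occupied by rigid jobs, V ⊆ T the set of allowed slots of a single flexible job with processing time p, where R ∩ V = ∅ and p ≤ |V|. Let W ⊆ T be the set of slots occupied by the event. Then the maximum agreement, namely max over P ⊆ V with |P| = p of |W \ (R ∪ P)|, equals |W| − |W ∩ R| − max(p − (|V| − |V ∩ W|), 0). -/

import Mathlib

/-- Maximum agreement in a core instance: with rigid-job slots `R`, flexible-job
allowed slots `V` (disjoint from `R`) and processing time `p ≤ |V|`, and event
slots `W`, the maximum over all `P ⊆ V` with `|P| = p` of `|W \ (R ∪ P)|` equals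
`|W| - |W ∩ R| - max (p - (|V| - |V ∩ W|)) 0`. -/
theorem core_instance_max_agreement
    {T : Type*} [Fintype T] [DecidableEq T]
    (R V W : Finset T) (hRV : R ∩ V = ∅)
    (p : ℕ) (hp : p ≤ V.card) :
    (((V.powersetCard p).sup fun P => (W \ (R ∪ P)).card : ℕ) : ℤ) =
      (W.card : ℤ) - ((W ∩ R).card : ℤ) -
        max ((p : ℤ) - ((V.card : ℤ) - ((V ∩ W).card : ℤ))) 0 := by
  classical
  set A := V \ W with hA
  have hVA : A.card + (V ∩ W).card = V.card := Finset.card_sdiff_add_card_inter V W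
  have hWR : (W \ R).card + (W ∩ R).card = W.card := Finset.card_sdiff_add_card_inter W R
  have hVWsub : V ∩ W ⊆ W \ R := by
    intro x hx
    simp only [Finset.mem_inter, Finset.mem_sdiff] at hx ⊢
    refine ⟨hx.2, fun hxR => ?_⟩
    have : x ∈ R ∩ V := Finset.mem_inter.mpr ⟨hxR, hx.1⟩
    simp [hRV] at this
  have hVWle : (V ∩ W).card ≤ (W \ R).card := Finset.card_le_card hVWsub
  set m := p - A.card with hm
  have key : (V.powersetCard p).sup (fun P => (W \ (R ∪ P)).card) = (W \ R).card - m := by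
    apply le_antisymm
    · apply Finset.sup_le
      intro P hP
      rw [Finset.mem_powersetCard] at hP
      obtain ⟨hPV, hPcard⟩ := hP
      have h1 : W \ (R ∪ P) = (W \ R) \ P := by
        ext x; simp [Finset.mem_sdiff, Finset.mem_union]; tauto
      rw [h1]
      have h2 : ((W \ R) \ P).card + ((W \ R) ∩ P).card = (W \ R).card :=
        Finset.card_sdiff_add_card_inter _ _
      have h3 : W ∩ P ⊆ (W \ R) ∩ P := by
        intro x hx
        simp only [Finset.mem_inter, Finset.mem_sdiff] at hx ⊢
        refine ⟨⟨hx.1, fun hxR => ?_⟩, hx.2⟩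
        have : x ∈ R ∩ V := Finset.mem_inter.mpr ⟨hxR, hPV hx.2⟩
        simp [hRV] at this
      have h4 : (P \ W).card + (P ∩ W).card = P.card := Finset.card_sdiff_add_card_inter _ _
      have h5 : P \ W ⊆ A := by
        intro x hx
        simp only [Finset.mem_sdiff, hA] at hx ⊢
        exact ⟨hPV hx.1, hx.2⟩
      have h6 : (P \ W).card ≤ A.card := Finset.card_le_card h5
      have h7 : (W ∩ P).card ≤ ((W \ R) ∩ P).card := Finset.card_le_card h3
      have h8 : (W ∩ P).card = (P ∩ W).card := by rw [Finset.inter_comm]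
      omega
    · have hk : min p A.card ≤ A.card := min_le_right _ _
      obtain ⟨A', hA'sub, hA'card⟩ := Finset.exists_subset_card_eq hk
      have hrem : p - min p A.card ≤ (V ∩ W).card := by omega
      obtain ⟨B', hB'sub, hB'card⟩ := Finset.exists_subset_card_eq hrem
      have hdisj : Disjoint A' B' := by
        rw [Finset.disjoint_left]
        intro x hxA hxB
        have h1 := hA'sub hxA
        have h2 := hB'sub hxB
        simp only [hA, Finset.mem_sdiff, Finset.mem_inter] at h1 h2
        exact h1.2 h2.2
      set P := A' ∪ B' with hPdef
      have hPV : P ⊆ V := by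
        apply Finset.union_subset
        · exact hA'sub.trans Finset.sdiff_subset
        · exact hB'sub.trans Finset.inter_subset_left
      have hPcard : P.card = p := by
        rw [hPdef, Finset.card_union_of_disjoint hdisj, hA'card, hB'card]
        omega
      have hPmem : P ∈ V.powersetCard p := Finset.mem_powersetCard.mpr ⟨hPV, hPcard⟩
      refine le_trans ?_ (Finset.le_sup hPmem)
      have h1 : W \ (R ∪ P) = (W \ R) \ P := by
        ext x; simp [Finset.mem_sdiff, Finset.mem_union]; tauto
      rw [h1]
      have h2 : ((W \ R) \ P).card + ((W \ R) ∩ P).card = (W \ R).card :=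
        Finset.card_sdiff_add_card_inter _ _
      have h3 : (W \ R) ∩ P ⊆ B' := by
        intro x hx
        simp only [Finset.mem_inter, Finset.mem_sdiff, hPdef, Finset.mem_union] at hx
        rcases hx.2 with h | h
        · have := hA'sub h
          simp only [hA, Finset.mem_sdiff] at this
          exact absurd hx.1.1 this.2
        · exact h
      have h4 : ((W \ R) ∩ P).card ≤ p - min p A.card := hB'card ▸ Finset.card_le_card h3
      omega
  rw [key]
  have h9 : (V ∩ W).card ≤ V.card := Finset.card_le_card Finset.inter_subset_left
  omega
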